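/- On the quadric sheet {Q = 1, x₀ > 0} in ℝ³, let v = v(x₀) satisfy dv/dx₀ = (√(3x₀²−1)/(√2(x₀²−1)))·v for x₀ > 1. Then the function H/v is strictly increasing in x₀ on (1,∞), where H = x₀r² and r² = 2x₀² − 2 on this quadric. Equivalently, d/dx₀(H/v) = (p²/v)(p² − x₀) > 0, where p² = √(4x₀² + r²). -/

import Mathlib

open Real Set

/-- On the quadric sheet {Q = 1, x₀ > 0}: if v solves
    dv/dx₀ = (√(3x₀²−1)/(√2(x₀²−1)))·v and v > 0 on (1,∞), then
    H/v = x₀(2x₀²−2)/v is strictly increasing on (1,∞), with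
    d/dx₀(H/v) = (p²/v)(p² − x₀) > 0, where p² = √(6x₀²−2). -/
theorem H_over_v_strictMono (v : ℝ → ℝ)
    (hv : ∀ x ∈ Ioi (1:ℝ),
      HasDerivAt v (Real.sqrt (3 * x ^ 2 - 1) / (Real.sqrt 2 * (x ^ 2 - 1)) * v x) x)
    (hvpos : ∀ x ∈ Ioi (1:ℝ), 0 < v x) :
    StrictMonoOn (fun x => x * (2 * x ^ 2 - 2) / v x) (Ioi 1) ∧
    ∀ x ∈ Ioi (1:ℝ),
      HasDerivAt (fun x => x * (2 * x ^ 2 - 2) / v x)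
        (Real.sqrt (6 * x ^ 2 - 2) / v x * (Real.sqrt (6 * x ^ 2 - 2) - x)) x ∧
      0 < Real.sqrt (6 * x ^ 2 - 2) / v x * (Real.sqrt (6 * x ^ 2 - 2) - x) := by
  have hderiv : ∀ x ∈ Ioi (1:ℝ),
      HasDerivAt (fun x => x * (2 * x ^ 2 - 2) / v x)
        (Real.sqrt (6 * x ^ 2 - 2) / v x * (Real.sqrt (6 * x ^ 2 - 2) - x)) x := by
    intro x hx
    have hx1 : (1:ℝ) < x := hx
    have hv0 : v x ≠ 0 := (hvpos x hx).ne'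
    have hH : HasDerivAt (fun x : ℝ => x * (2 * x ^ 2 - 2)) (6 * x ^ 2 - 2) x := by
      have h1 : HasDerivAt (fun x : ℝ => x * (2 * x ^ 2 - 2))
          (1 * (2 * x ^ 2 - 2) + x * (2 * (↑2 * x ^ (2 - 1)))) x :=
        (hasDerivAt_id x).mul (((hasDerivAt_pow 2 x).const_mul 2).sub_const 2)
      convert h1 using 1
      simp
      ring
    have hdiv : HasDerivAt (fun y => y * (2 * y ^ 2 - 2) / v y) _ x := hH.div (hv x hx) hv0
    convert hdiv using 1
    have h2 : Real.sqrt 2 * Real.sqrt (3 * x ^ 2 - 1) = Real.sqrt (6 * x ^ 2 - 2) := by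
      rw [← Real.sqrt_mul (by positivity : (0:ℝ) ≤ 2)]
      ring_nf
    have h3 : Real.sqrt (6 * x ^ 2 - 2) ^ 2 = 6 * x ^ 2 - 2 :=
      Real.sq_sqrt (by nlinarith)
    have h4 : x ^ 2 - 1 ≠ 0 := by nlinarith
    have h5 : Real.sqrt 2 ≠ 0 := by positivity
    have ha : Real.sqrt 2 ^ 2 = 2 := Real.sq_sqrt (by norm_num)
    field_simp
    linear_combination (norm := ring_nf) (Real.sqrt 2) * h3
      + (x * Real.sqrt 2) * h2
      - (x * Real.sqrt (3 * x ^ 2 - 1)) * ha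
  have hpos : ∀ x ∈ Ioi (1:ℝ),
      0 < Real.sqrt (6 * x ^ 2 - 2) / v x * (Real.sqrt (6 * x ^ 2 - 2) - x) := by
    intro x hx
    have hx1 : (1:ℝ) < x := hx
    have hs : x < Real.sqrt (6 * x ^ 2 - 2) := by
      exact (Real.lt_sqrt (by positivity)).mpr (by nlinarith)
    have hs0 : 0 < Real.sqrt (6 * x ^ 2 - 2) := lt_trans (by positivity) hs
    exact mul_pos (div_pos hs0 (hvpos x hx)) (by linarith)
  refine ⟨?_, fun x hx => ⟨hderiv x hx, hpos x hx⟩⟩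
  have hmono : StrictMonoOn (fun x => x * (2 * x ^ 2 - 2) / v x) (Ioi 1) := by
    apply strictMonoOn_of_deriv_pos (convex_Ioi 1)
    · exact fun x hx => (hderiv x hx).continuousAt.continuousWithinAt
    · intro x hx
      rw [interior_Ioi] at hx
      rw [(hderiv x hx).deriv]
      exact hpos x hx
  exact hmono
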